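/- Let f : ℝ → ℝ and x ∈ ℝ. Suppose that for every ε > 0 there exists δ > 0 such that for all h₁, h₂ ∈ (0, δ) one has |h₂·f(x+h₁) + h₁·f(x−h₂) − (h₁+h₂)·f(x)| ≤ ε·h₁·h₂. Then f is differentiable at x, i.e. there exists d ∈ ℝ such that f has derivative d at x. -/
import Mathlib

private lemma cross_slope (f : ℝ → ℝ) (x ε δ : ℝ)
    (H : ∀ h₁ h₂ : ℝ, h₁ ∈ Set.Ioo 0 δ → h₂ ∈ Set.Ioo 0 δ →
      |h₂ * f (x + h₁) + h₁ * f (x - h₂) - (h₁ + h₂) * f x| ≤ ε * h₁ * h₂)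
    {h₁ h₂ : ℝ} (m₁ : h₁ ∈ Set.Ioo 0 δ) (m₂ : h₂ ∈ Set.Ioo 0 δ) :
    |slope f x (x + h₁) - slope f x (x - h₂)| ≤ ε := by
  have h1pos := m₁.1
  have h2pos := m₂.1
  have h1ne : h₁ ≠ 0 := ne_of_gt h1pos
  have h2ne : h₂ ≠ 0 := ne_of_gt h2pos
  have key : slope f x (x + h₁) - slope f x (x - h₂)
      = (h₂ * f (x + h₁) + h₁ * f (x - h₂) - (h₁ + h₂) * f x) / (h₁ * h₂) := by
    have e1 : (x + h₁) - x = h₁ := by ring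
    have e2 : (x - h₂) - x = -h₂ := by ring
    rw [slope_def_field, slope_def_field, e1, e2, div_neg, ← neg_div, neg_sub,
      div_sub_div _ _ h1ne h2ne]
    congr 1
    ring
  rw [key, abs_div, abs_of_pos (mul_pos h1pos h2pos),
    div_le_iff₀ (mul_pos h1pos h2pos)]
  calc |h₂ * f (x + h₁) + h₁ * f (x - h₂) - (h₁ + h₂) * f x| ≤ ε * h₁ * h₂ := H h₁ h₂ m₁ m₂
    _ = ε * (h₁ * h₂) := by ring

theorem diff_criterion_of_second_order_difference
    (f : ℝ → ℝ) (x : ℝ)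
    (hyp : ∀ ε > (0:ℝ), ∃ δ > (0:ℝ), ∀ h₁ h₂ : ℝ,
      h₁ ∈ Set.Ioo 0 δ → h₂ ∈ Set.Ioo 0 δ →
      |h₂ * f (x + h₁) + h₁ * f (x - h₂) - (h₁ + h₂) * f x| ≤ ε * h₁ * h₂) :
    ∃ d : ℝ, HasDerivAt f d x := by
  have hC : Cauchy (Filter.map (slope f x) (nhdsWithin x {x}ᶜ)) := by
    rw [Metric.cauchy_iff]
    refine ⟨Filter.map_neBot, ?_⟩
    intro ε hε
    obtain ⟨δ, hδ, H⟩ := hyp (ε/3) (by linarith)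
    set S : Set ℝ := Set.Ioo (x - δ) (x + δ) \ {x} with hS
    have hSmem : S ∈ nhdsWithin x {x}ᶜ := by
      apply Filter.inter_mem_inf (Ioo_mem_nhds (by linarith) (by linarith))
      exact Filter.mem_principal_self _
    refine ⟨slope f x '' S, Filter.image_mem_map hSmem, ?_⟩
    -- key: any point of S is x+h or x-h with h ∈ Ioo 0 δ
    have main : ∀ a ∈ S, ∀ b ∈ S, |slope f x a - slope f x b| ≤ 2 * (ε/3) := by
      intro a ha b hb
      have hmid : (δ/2 : ℝ) ∈ Set.Ioo (0:ℝ) δ := ⟨by linarith, by linarith⟩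
      have repr : ∀ c ∈ S, (∃ h ∈ Set.Ioo (0:ℝ) δ, c = x + h) ∨
          (∃ h ∈ Set.Ioo (0:ℝ) δ, c = x - h) := by
        intro c hc
        rcases lt_or_gt_of_ne (show c ≠ x from hc.2) with h | h
        · exact Or.inr ⟨x - c, ⟨by linarith, by linarith [hc.1.1]⟩, by ring⟩
        · exact Or.inl ⟨c - x, ⟨by linarith, by linarith [hc.1.2]⟩, by ring⟩
      rcases repr a ha with ⟨h₁, m₁, rfl⟩ | ⟨h₁, m₁, rfl⟩ <;>
        rcases repr b hb with ⟨h₂, m₂, rfl⟩ | ⟨h₂, m₂, rfl⟩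
      · have t1 := cross_slope f x (ε/3) δ H m₁ hmid
        have t2 := cross_slope f x (ε/3) δ H m₂ hmid
        calc |slope f x (x + h₁) - slope f x (x + h₂)|
            ≤ |slope f x (x + h₁) - slope f x (x - δ/2)|
              + |slope f x (x - δ/2) - slope f x (x + h₂)| := abs_sub_le _ _ _
          _ ≤ 2 * (ε/3) := by rw [abs_sub_comm (slope f x (x - δ/2))]; linarith
      · have := cross_slope f x (ε/3) δ H m₁ m₂; linarith
      · have := cross_slope f x (ε/3) δ H m₂ m₁
        rw [abs_sub_comm]; linarith
      · have t1 := cross_slope f x (ε/3) δ H hmid m₁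
        have t2 := cross_slope f x (ε/3) δ H hmid m₂
        calc |slope f x (x - h₁) - slope f x (x - h₂)|
            ≤ |slope f x (x - h₁) - slope f x (x + δ/2)|
              + |slope f x (x + δ/2) - slope f x (x - h₂)| := abs_sub_le _ _ _
          _ ≤ 2 * (ε/3) := by rw [abs_sub_comm (slope f x (x - h₁))]; linarith
    rintro u ⟨a, ha, rfl⟩ v ⟨b, hb, rfl⟩
    rw [Real.dist_eq]
    calc |slope f x a - slope f x b| ≤ 2 * (ε/3) := main a ha b hb
      _ < ε := by linarith
  obtain ⟨d, hd⟩ := CompleteSpace.complete hC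
  exact ⟨d, hasDerivAt_iff_tendsto_slope.mpr hd⟩
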